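/- Let y^{(1)},...,y^{(r)} ∈ {0,1}^n be indicator vectors of r pairwise disjoint subsets of [n], each of size k ≥ 1, and let Y* = Σ_{i=1}^r (y^{(i)})^{⊗m} with m ≥ 2. Then the tensor nuclear norm of Y* equals r·k^{m/2}. -/

import Mathlib

open scoped BigOperators

noncomputable section

def tInner {n m : ℕ} (A B : (Fin m → Fin n) → ℝ) : ℝ :=
  ∑ i : Fin m → Fin n, A i * B i

def rankOne (n m : ℕ) (u : EuclideanSpace ℝ (Fin n)) : (Fin m → Fin n) → ℝ :=
  fun i => ∏ j : Fin m, u (i j)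

/-- Tensor nuclear norm: infimum of `Σ |λ_i|` over decompositions into
symmetric rank-one tensors with unit vectors. -/
def nucNorm {n m : ℕ} (B : (Fin m → Fin n) → ℝ) : ℝ :=
  sInf {s | ∃ (q : ℕ) (lam : Fin q → ℝ) (u : Fin q → EuclideanSpace ℝ (Fin n)),
    (∀ i, ‖u i‖ = 1) ∧ B = ∑ i : Fin q, lam i • rankOne n m (u i) ∧
    s = ∑ i : Fin q, |lam i|}

/-- Pairing of two rank-one tensors. -/
lemma pair_sum {n m : ℕ} (u v : Fin n → ℝ) :
    ∑ idx : Fin m → Fin n, (∏ t : Fin m, u (idx t)) * (∏ t : Fin m, v (idx t))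
      = (∑ p : Fin n, u p * v p) ^ m := by
  have h1 : ∀ idx : Fin m → Fin n,
      (∏ t : Fin m, u (idx t)) * (∏ t : Fin m, v (idx t))
        = ∏ t : Fin m, (u (idx t) * v (idx t)) := by
    intro idx; rw [Finset.prod_mul_distrib]
  simp_rw [h1]
  have h2 := Finset.prod_univ_sum (fun _ : Fin m => (Finset.univ : Finset (Fin n)))
      (fun _ p => u p * v p)
  rw [Fintype.piFinset_univ] at h2
  rw [← h2, Finset.prod_const, Finset.card_univ, Fintype.card_fin]

lemma sum_pair {n m q r' : ℕ} (lam : Fin q → ℝ) (w : Fin q → Fin n → ℝ)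
    (v : Fin r' → Fin n → ℝ) :
    ∑ idx : Fin m → Fin n,
        (∑ i : Fin q, lam i * ∏ t : Fin m, w i (idx t)) *
          (∑ j : Fin r', ∏ t : Fin m, v j (idx t))
      = ∑ i : Fin q, lam i * ∑ j : Fin r', (∑ p : Fin n, w i p * v j p) ^ m := by
  simp_rw [Finset.sum_mul, Finset.mul_sum]
  rw [Finset.sum_comm]
  refine Finset.sum_congr rfl fun i _ => ?_
  rw [Finset.sum_comm]
  refine Finset.sum_congr rfl fun j _ => ?_
  rw [← pair_sum (w i) (v j), Finset.mul_sum]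
  refine Finset.sum_congr rfl fun idx _ => ?_
  ring

theorem nucNorm_agreement (n r k m : ℕ) (hr : 1 ≤ r) (hk : 1 ≤ k) (hm : 2 ≤ m)
    (y : Fin r → Fin n → ℝ)
    (h01 : ∀ i j, y i j = 0 ∨ y i j = 1)
    (hdisj : ∀ i i', i ≠ i' → ∀ j, y i j * y i' j = 0)
    (hsize : ∀ i, ∑ j : Fin n, y i j = (k : ℝ)) :
    nucNorm (fun idx : Fin m → Fin n => ∑ i : Fin r, ∏ t : Fin m, y i (idx t)) =
      (r : ℝ) * (k : ℝ) ^ ((m : ℝ) / 2) := by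
  classical
  set c : ℝ := Real.sqrt k with hc
  have hkpos : (0:ℝ) < k := by exact_mod_cast hk
  have hcpos : 0 < c := Real.sqrt_pos.mpr hkpos
  have hcc : c * c = k := Real.mul_self_sqrt hkpos.le
  have hcne : c ≠ 0 := ne_of_gt hcpos
  have hcmne : c ^ m ≠ 0 := pow_ne_zero _ hcne
  have hcpow : c ^ m = (k:ℝ) ^ ((m:ℝ)/2) := by
    rw [hc, Real.sqrt_eq_rpow, ← Real.rpow_natCast ((k:ℝ) ^ ((1:ℝ)/2)) m,
      ← Real.rpow_mul hkpos.le]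
    ring_nf
  have hyy : ∀ i j, y i j * y i j = y i j := by
    intro i j; rcases h01 i j with h | h <;> rw [h] <;> ring
  -- column sums are between 0 and 1
  have hcol0 : ∀ p, (0:ℝ) ≤ ∑ j : Fin r, y j p := by
    intro p
    refine Finset.sum_nonneg fun j _ => ?_
    rcases h01 j p with h | h <;> rw [h] <;> norm_num
  have hcol1 : ∀ p, ∑ j : Fin r, y j p ≤ 1 := by
    intro p
    by_cases h : ∃ j0, y j0 p = 1
    · obtain ⟨j0, hj0⟩ := h
      have : ∑ j : Fin r, y j p = y j0 p := by
        refine Finset.sum_eq_single_of_mem j0 (Finset.mem_univ _) fun j _ hne => ?_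
        have h2 := hdisj j j0 hne p
        rw [hj0, mul_one] at h2
        exact h2
      rw [this, hj0]
    · push_neg at h
      have : ∑ j : Fin r, y j p = 0 := by
        refine Finset.sum_eq_zero fun j _ => ?_
        rcases h01 j p with h0 | h1
        · exact h0
        · exact absurd h1 (h j)
      rw [this]; norm_num
  -- key inequality
  have key : ∀ u : Fin n → ℝ, (∑ p : Fin n, u p ^ 2) = 1 →
      |∑ j : Fin r, ((∑ p : Fin n, u p * (y j p / c)) ^ m)| ≤ 1 := by
    intro u hu
    set a : Fin r → ℝ := fun j => ∑ p : Fin n, u p * (y j p / c) with ha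
    have hstep1 : ∀ j, a j ^ 2 ≤ ∑ p : Fin n, u p ^ 2 * y j p := by
      intro j
      have hcs := Finset.sum_mul_sq_le_sq_mul_sq (Finset.univ : Finset (Fin n))
        (fun p => u p * y j p) (fun p => y j p)
      have h1 : ∑ p : Fin n, (u p * y j p) * y j p = ∑ p : Fin n, u p * y j p := by
        refine Finset.sum_congr rfl fun p _ => ?_
        rw [mul_assoc, hyy j p]
      have h2 : ∑ p : Fin n, (u p * y j p) ^ 2 = ∑ p : Fin n, u p ^ 2 * y j p := by
        refine Finset.sum_congr rfl fun p _ => ?_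
        rw [mul_pow, sq (y j p), hyy j p]
      have h3 : ∑ p : Fin n, (y j p) ^ 2 = (k:ℝ) := by
        rw [← hsize j]
        refine Finset.sum_congr rfl fun p _ => ?_
        rw [sq, hyy j p]
      rw [h1, h2, h3] at hcs
      have haj : a j = (∑ p : Fin n, u p * y j p) / c := by
        show (∑ p : Fin n, u p * (y j p / c)) = _
        rw [Finset.sum_div]
        exact Finset.sum_congr rfl fun p _ => (mul_div_assoc (u p) (y j p) c).symm
      rw [haj, div_pow]
      rw [div_le_iff₀ (by positivity)]
      calc (∑ p : Fin n, u p * y j p) ^ 2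
          ≤ (∑ p : Fin n, u p ^ 2 * y j p) * k := hcs
        _ = (∑ p : Fin n, u p ^ 2 * y j p) * c ^ 2 := by rw [sq, hcc]
    have hstep3 : ∑ j : Fin r, a j ^ 2 ≤ 1 := by
      calc ∑ j : Fin r, a j ^ 2
          ≤ ∑ j : Fin r, ∑ p : Fin n, u p ^ 2 * y j p :=
            Finset.sum_le_sum fun j _ => hstep1 j
        _ = ∑ p : Fin n, u p ^ 2 * ∑ j : Fin r, y j p := by
            rw [Finset.sum_comm]
            exact Finset.sum_congr rfl fun p _ => by rw [Finset.mul_sum]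
        _ ≤ ∑ p : Fin n, u p ^ 2 * 1 := by
            refine Finset.sum_le_sum fun p _ => ?_
            exact mul_le_mul_of_nonneg_left (hcol1 p) (sq_nonneg _)
        _ = 1 := by simp [hu]
    have habs : ∀ j, |a j| ≤ 1 := by
      intro j
      rw [← sq_le_one_iff_abs_le_one]
      refine le_trans ?_ hstep3
      exact Finset.single_le_sum (fun j _ => sq_nonneg (a j)) (Finset.mem_univ j)
    calc |∑ j : Fin r, a j ^ m| ≤ ∑ j : Fin r, |a j ^ m| := Finset.abs_sum_le_sum_abs _ _
      _ = ∑ j : Fin r, |a j| ^ m := by simp [abs_pow]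
      _ ≤ ∑ j : Fin r, |a j| ^ 2 :=
          Finset.sum_le_sum fun j _ => pow_le_pow_of_le_one (abs_nonneg _) (habs j) hm
      _ = ∑ j : Fin r, a j ^ 2 := by simp [sq_abs]
      _ ≤ 1 := hstep3
  -- the set
  set S : Set ℝ := {s | ∃ (q : ℕ) (lam : Fin q → ℝ) (u : Fin q → EuclideanSpace ℝ (Fin n)),
    (∀ i, ‖u i‖ = 1) ∧
      (fun idx : Fin m → Fin n => ∑ i : Fin r, ∏ t : Fin m, y i (idx t))
        = ∑ i : Fin q, lam i • rankOne n m (u i) ∧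
    s = ∑ i : Fin q, |lam i|} with hS
  -- membership of r * c^m
  have hmem : (r : ℝ) * c ^ m ∈ S := by
    refine ⟨r, fun _ => c ^ m, fun i => WithLp.toLp 2 (fun p => y i p / c : Fin n → ℝ), ?_, ?_, ?_⟩
    · intro i
      rw [EuclideanSpace.norm_eq]
      have : ∑ p : Fin n, ‖y i p / c‖ ^ 2 = 1 := by
        have : ∀ p, ‖y i p / c‖ ^ 2 = y i p / (k:ℝ) := by
          intro p
          rw [Real.norm_eq_abs, sq_abs, div_pow, sq, hyy i p, sq, hcc]
        simp_rw [this]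
        rw [← Finset.sum_div, hsize i, div_self (ne_of_gt hkpos)]
      rw [this, Real.sqrt_one]
    · funext idx
      rw [Finset.sum_apply]
      refine Finset.sum_congr rfl fun i _ => ?_
      show (∏ t : Fin m, y i (idx t)) = c ^ m • rankOne n m _ idx
      rw [smul_eq_mul]
      show (∏ t : Fin m, y i (idx t)) = c ^ m * ∏ t : Fin m, y i (idx t) / c
      rw [Finset.prod_div_distrib, Finset.prod_const, Finset.card_univ, Fintype.card_fin,
        mul_div_cancel₀ _ hcmne]
    · show (r:ℝ) * c ^ m = ∑ _i : Fin r, |c ^ m|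
      rw [abs_of_pos (show (0:ℝ) < c ^ m by positivity), Finset.sum_const, Finset.card_univ,
        Fintype.card_fin, nsmul_eq_mul]
  -- lower bound: every element of S is ≥ r * c^m
  have hlb : ∀ s ∈ S, (r : ℝ) * c ^ m ≤ s := by
    rintro s ⟨q, lam, u, hu, hB, hs⟩
    -- the pairing value
    set D : ℝ := ∑ idx : Fin m → Fin n,
        (∑ i : Fin r, ∏ t : Fin m, y i (idx t)) *
          (∑ j : Fin r, ∏ t : Fin m, (y j (idx t) / c)) with hD
    -- compute D = r * c^m
    have hD1 : D = (r : ℝ) * c ^ m := by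
      have := sum_pair (m := m) (fun _ : Fin r => (1:ℝ)) y (fun j p => y j p / c)
      simp only [one_mul] at this
      rw [hD, this]
      have hdiag : ∀ i : Fin r,
          ∑ j : Fin r, (∑ p : Fin n, y i p * (y j p / c)) ^ m = c ^ m := by
        intro i
        have : ∑ j : Fin r, (∑ p : Fin n, y i p * (y j p / c)) ^ m
            = (∑ p : Fin n, y i p * (y i p / c)) ^ m := by
          refine Finset.sum_eq_single_of_mem i (Finset.mem_univ _) fun j _ hne => ?_
          have : ∑ p : Fin n, y i p * (y j p / c) = 0 := by
            refine Finset.sum_eq_zero fun p _ => ?_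
            rw [← mul_div_assoc, hdisj i j (Ne.symm hne) p, zero_div]
          rw [this, zero_pow (by omega)]
        rw [this]
        have : ∑ p : Fin n, y i p * (y i p / c) = c := by
          have h1 : ∀ p, y i p * (y i p / c) = y i p / c := by
            intro p; rw [mul_div_assoc', hyy i p]
          simp_rw [h1]
          rw [← Finset.sum_div, hsize i, ← hcc, mul_div_assoc, div_self hcne, mul_one]
        rw [this]
      simp_rw [hdiag]
      rw [Finset.sum_const, Finset.card_univ, Fintype.card_fin, nsmul_eq_mul]
    -- compute D via decomposition and bound it
    have hD2 : |D| ≤ ∑ i : Fin q, |lam i| := by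
      have hBidx : ∀ idx : Fin m → Fin n,
          (∑ i : Fin r, ∏ t : Fin m, y i (idx t))
            = ∑ i : Fin q, lam i * ∏ t : Fin m, (u i : Fin n → ℝ) (idx t) := by
        intro idx
        have := congrFun hB idx
        rw [this, Finset.sum_apply]
        exact Finset.sum_congr rfl fun i _ => rfl
      have hDq : D = ∑ i : Fin q, lam i *
          ∑ j : Fin r, (∑ p : Fin n, (u i : Fin n → ℝ) p * (y j p / c)) ^ m := by
        rw [hD]
        simp_rw [hBidx]
        exact sum_pair lam (fun i p => (u i : Fin n → ℝ) p) (fun j p => y j p / c)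
      rw [hDq]
      calc |∑ i : Fin q, lam i * ∑ j : Fin r, (∑ p : Fin n, (u i : Fin n → ℝ) p * (y j p / c)) ^ m|
          ≤ ∑ i : Fin q, |lam i * ∑ j : Fin r, (∑ p : Fin n, (u i : Fin n → ℝ) p * (y j p / c)) ^ m| :=
            Finset.abs_sum_le_sum_abs _ _
        _ ≤ ∑ i : Fin q, |lam i| := by
            refine Finset.sum_le_sum fun i _ => ?_
            rw [abs_mul]
            have hnorm : ∑ p : Fin n, ((u i : Fin n → ℝ) p) ^ 2 = 1 := by
              have h := hu i
              rw [EuclideanSpace.norm_eq] at h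
              have h2 : Real.sqrt (∑ p : Fin n, ‖(u i : Fin n → ℝ) p‖ ^ 2) = 1 := h
              have h3 : ∑ p : Fin n, ‖(u i : Fin n → ℝ) p‖ ^ 2 = 1 := by
                have hnn : (0:ℝ) ≤ ∑ p : Fin n, ‖(u i : Fin n → ℝ) p‖ ^ 2 :=
                  Finset.sum_nonneg fun p _ => sq_nonneg _
                nlinarith [Real.sq_sqrt hnn]
              rw [← h3]
              exact Finset.sum_congr rfl fun p _ => by rw [Real.norm_eq_abs, sq_abs]
            have := key (fun p => (u i : Fin n → ℝ) p) hnorm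
            calc |lam i| * |∑ j : Fin r, (∑ p : Fin n, (u i : Fin n → ℝ) p * (y j p / c)) ^ m|
                ≤ |lam i| * 1 := mul_le_mul_of_nonneg_left this (abs_nonneg _)
              _ = |lam i| := mul_one _
    rw [hs, ← hD1]
    exact le_trans (le_abs_self D) hD2
  have hne : S.Nonempty := ⟨_, hmem⟩
  have hbdd : BddBelow S := ⟨(r : ℝ) * c ^ m, fun s hsmem => hlb s hsmem⟩
  rw [show nucNorm (fun idx : Fin m → Fin n => ∑ i : Fin r, ∏ t : Fin m, y i (idx t)) = sInf S
    from rfl, ← hcpow]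
  exact le_antisymm (csInf_le hbdd hmem) (le_csInf hne hlb)
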